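/- Let G be the connected strongly interval graph on the vertex set {J_0,…,J_k} ∪ {I_1,…,I_r}, where k ≥ 1, J_0 = [0,0], J_i = [i−1,i] for i = 1,…,k, and I_j = [a_j,b_j] ⊆ [0,k]\{k} with a_j a nonnegative integer for j = 1,…,r. Then J_0, J_1, …, J_k is an induced path of length k in G, and the length of a longest induced path in G equals k; in particular L(G) = k = c(G). -/

import Mathlib

/-- `c(G)`: the number of maximal cliques of a graph `G`. -/
noncomputable def numMaximalCliques {V : Type*} (G : SimpleGraph V) : ℕ :=
  {s : Set V | Maximal (fun t => G.IsClique t) s}.ncard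

/-- `f 0, f 1, …, f m` is an induced path in `G`: the vertices are pairwise distinct and two
of them are adjacent if and only if they are consecutive. -/
def IsInducedPath {V : Type*} (G : SimpleGraph V) (m : ℕ) (f : ℕ → V) : Prop :=
  (∀ i ≤ m, ∀ j ≤ m, f i = f j → i = j) ∧
  (∀ i ≤ m, ∀ j ≤ m, (G.Adj (f i) (f j) ↔ (j = i + 1 ∨ i = j + 1)))

/-- The length of a longest induced path in `G`. -/
noncomputable def longestInducedPath {V : Type*} (G : SimpleGraph V) : ℕ :=
  sSup {m | ∃ f : ℕ → V, IsInducedPath G m f}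

/-- `L(G)`: the sum, over the connected components of `G`, of the lengths of longest induced
paths of the components. -/
noncomputable def inducedPathSum {V : Type*} (G : SimpleGraph V) : ℕ :=
  ∑ᶠ c : G.ConnectedComponent, longestInducedPath (G.induce c.supp)

/-- The interval graph on a set `I` of closed real intervals, encoded as pairs
`(left endpoint, right endpoint)`: two distinct intervals are adjacent iff they intersect. -/
def intervalGraph (I : Set (ℝ × ℝ)) : SimpleGraph I where
  Adj p q := p ≠ q ∧ (Set.Icc p.val.1 p.val.2 ∩ Set.Icc q.val.1 q.val.2).Nonempty
  symm := ⟨by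
    rintro p q ⟨h1, h2⟩
    exact ⟨h1.symm, by rwa [Set.inter_comm]⟩⟩
  loopless := ⟨fun p h => h.1 rfl⟩

/-- The interval `J_i`: `J_0 = [0,0]` and `J_i = [i-1,i]` for `i ≥ 1`. -/
noncomputable def Jint (i : ℕ) : ℝ × ℝ := if i = 0 then (0, 0) else ((i : ℝ) - 1, (i : ℝ))

/-- The vertex set `{J_0,…,J_k} ∪ {I_1,…,I_r}` of a connected strongly interval graph, where
`I_j = [a j, b j]`. -/
def stronglyIntervalVerts (k r : ℕ) (a : Fin r → ℕ) (b : Fin r → ℝ) : Set (ℝ × ℝ) :=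
  (Jint '' {i | i ≤ k}) ∪ (Set.range fun j : Fin r => ((a j : ℝ), b j))

/-- The conditions on the data of a connected strongly interval graph: `k ≥ 1` and each
`I_j = [a j, b j]` is a genuine closed interval, with integer left endpoint `a j`, contained
in `[0,k] \ {k}`. -/
def StronglyIntervalData (k r : ℕ) (a : Fin r → ℕ) (b : Fin r → ℝ) : Prop :=
  1 ≤ k ∧ ∀ j : Fin r, (a j : ℝ) ≤ b j ∧
    Set.Icc (a j : ℝ) (b j) ⊆ Set.Icc (0 : ℝ) (k : ℝ) \ {(k : ℝ)}

/-- A graph is a strongly interval graph if every connected component of it is isomorphic to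
a connected strongly interval graph. -/
def IsStronglyIntervalGraph {V : Type*} (G : SimpleGraph V) : Prop :=
  ∀ c : G.ConnectedComponent, ∃ (k r : ℕ) (a : Fin r → ℕ) (b : Fin r → ℝ),
    StronglyIntervalData k r a b ∧
    Nonempty ((G.induce c.supp) ≃g intervalGraph (stronglyIntervalVerts k r a b))

lemma Jint_fst (i : ℕ) : (Jint i).1 = if i = 0 then (0:ℝ) else (i:ℝ) - 1 := by
  unfold Jint; split <;> rfl

lemma Jint_snd (i : ℕ) : (Jint i).2 = (i:ℝ) := by
  unfold Jint; split <;> simp_all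

lemma Jint_inj {i j : ℕ} (hij : Jint i = Jint j) : i = j := by
  have := congrArg Prod.snd hij
  rw [Jint_snd, Jint_snd] at this
  exact_mod_cast this

lemma Jint_mem {k r : ℕ} {a : Fin r → ℕ} {b : Fin r → ℝ} (i : ℕ) (hi : i ≤ k) :
    Jint i ∈ stronglyIntervalVerts k r a b :=
  Or.inl ⟨i, hi, rfl⟩

lemma verts_finite (k r : ℕ) (a : Fin r → ℕ) (b : Fin r → ℝ) :
    (stronglyIntervalVerts k r a b).Finite :=
  ((Set.finite_Iic k).image Jint).union (Set.finite_range _)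

lemma vert_struct {k r : ℕ} {a : Fin r → ℕ} {b : Fin r → ℝ}
    (h : StronglyIntervalData k r a b) (v : stronglyIntervalVerts k r a b) :
    ∃ t : ℕ, v.val.1 = (t : ℝ) ∧ t < k ∧ v.val.1 ≤ v.val.2 ∧ v.val.2 ≤ (k : ℝ) := by
  obtain ⟨hk, hI⟩ := h
  rcases v.2 with ⟨i, hi, hv⟩ | ⟨j, hv⟩
  · simp only [Set.mem_setOf_eq] at hi
    rcases Nat.eq_zero_or_pos i with rfl | hpos
    · refine ⟨0, ?_, hk, ?_, ?_⟩ <;> rw [← hv] <;> simp [Jint]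
    · refine ⟨i - 1, ?_, by omega, ?_, ?_⟩ <;> rw [← hv]
      · rw [Jint_fst, if_neg (by omega)]
        push_cast [Nat.cast_sub hpos]
        ring
      · rw [Jint_fst, if_neg (by omega), Jint_snd]; linarith
      · rw [Jint_snd]; exact_mod_cast hi
  · have hj := hI j
    have hbj : b j ∈ Set.Icc (0:ℝ) k \ {(k:ℝ)} := hj.2 (Set.mem_Icc.mpr ⟨hj.1, le_refl _⟩)
    have hbk : b j < (k:ℝ) := lt_of_le_of_ne hbj.1.2 hbj.2
    refine ⟨a j, ?_, ?_, ?_, ?_⟩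
    · rw [← hv]
    · have : (a j : ℝ) < k := lt_of_le_of_lt hj.1 hbk
      exact_mod_cast this
    · rw [← hv]; exact hj.1
    · rw [← hv]; exact hbj.1.2

lemma adj_iff {k r : ℕ} {a : Fin r → ℕ} {b : Fin r → ℝ}
    (h : StronglyIntervalData k r a b) (u v : stronglyIntervalVerts k r a b) :
    (intervalGraph (stronglyIntervalVerts k r a b)).Adj u v ↔
      u ≠ v ∧ u.val.1 ≤ v.val.2 ∧ v.val.1 ≤ u.val.2 := by
  obtain ⟨tu, -, -, hu12, -⟩ := vert_struct h u
  obtain ⟨tv, -, -, hv12, -⟩ := vert_struct h v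
  show (u ≠ v ∧ _) ↔ _
  rw [Set.Icc_inter_Icc, Set.nonempty_Icc, sup_le_iff, le_inf_iff, le_inf_iff]
  constructor
  · rintro ⟨h1, ⟨-, h2⟩, h3, -⟩; exact ⟨h1, h2, h3⟩
  · rintro ⟨h1, h2, h3⟩; exact ⟨h1, ⟨hu12, h2⟩, h3, hv12⟩

noncomputable def leftNat {k r : ℕ} {a : Fin r → ℕ} {b : Fin r → ℝ}
    (h : StronglyIntervalData k r a b) (v : stronglyIntervalVerts k r a b) : ℕ :=
  Classical.choose (vert_struct h v)

lemma leftNat_spec {k r : ℕ} {a : Fin r → ℕ} {b : Fin r → ℝ}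
    (h : StronglyIntervalData k r a b) (v : stronglyIntervalVerts k r a b) :
    v.val.1 = (leftNat h v : ℝ) ∧ leftNat h v < k ∧ v.val.1 ≤ v.val.2 ∧ v.val.2 ≤ (k : ℝ) :=
  Classical.choose_spec (vert_struct h v)

def Mcl (k r : ℕ) (a : Fin r → ℕ) (b : Fin r → ℝ) (t : ℕ) :
    Set (stronglyIntervalVerts k r a b) :=
  {v | v.val.1 ≤ (t:ℝ) ∧ (t:ℝ) ≤ v.val.2}

lemma Mcl_clique {k r : ℕ} {a : Fin r → ℕ} {b : Fin r → ℝ}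
    (h : StronglyIntervalData k r a b) (t : ℕ) :
    (intervalGraph (stronglyIntervalVerts k r a b)).IsClique (Mcl k r a b t) := by
  rintro u ⟨hu1, hu2⟩ v ⟨hv1, hv2⟩ hne
  exact (adj_iff h u v).mpr ⟨hne, hu1.trans hv2, hv1.trans hu2⟩

lemma Jt_mem_Mcl {k r : ℕ} {a : Fin r → ℕ} {b : Fin r → ℝ} {t : ℕ} (ht : t < k) :
    (⟨Jint t, Jint_mem t (le_of_lt ht)⟩ : stronglyIntervalVerts k r a b) ∈ Mcl k r a b t := by
  constructor
  · show (Jint t).1 ≤ (t:ℝ)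
    rw [Jint_fst]; split
    · positivity
    · linarith
  · show (t:ℝ) ≤ (Jint t).2
    rw [Jint_snd]

lemma Jt1_mem_Mcl {k r : ℕ} {a : Fin r → ℕ} {b : Fin r → ℝ} {t : ℕ} (ht : t < k) :
    (⟨Jint (t+1), Jint_mem (t+1) ht⟩ : stronglyIntervalVerts k r a b) ∈ Mcl k r a b t := by
  constructor
  · show (Jint (t+1)).1 ≤ (t:ℝ)
    rw [Jint_fst, if_neg (by omega)]; push_cast; linarith
  · show (t:ℝ) ≤ (Jint (t+1)).2
    rw [Jint_snd]; push_cast; linarith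

lemma Mcl_maximal {k r : ℕ} {a : Fin r → ℕ} {b : Fin r → ℝ}
    (h : StronglyIntervalData k r a b) {t : ℕ} (ht : t < k) :
    Maximal (fun s => (intervalGraph (stronglyIntervalVerts k r a b)).IsClique s)
      (Mcl k r a b t) := by
  refine ⟨Mcl_clique h t, fun s hs hsub => ?_⟩
  intro v hv
  set J1 : stronglyIntervalVerts k r a b := ⟨Jint t, Jint_mem t (le_of_lt ht)⟩ with hJ1
  set J2 : stronglyIntervalVerts k r a b := ⟨Jint (t+1), Jint_mem (t+1) ht⟩ with hJ2
  have hJ1m : J1 ∈ Mcl k r a b t := Jt_mem_Mcl ht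
  have hJ2m : J2 ∈ Mcl k r a b t := Jt1_mem_Mcl ht
  by_cases h1 : v = J1
  · rw [h1]; exact hJ1m
  by_cases h2 : v = J2
  · rw [h2]; exact hJ2m
  have hA1 := (adj_iff h v J1).mp (hs hv (hsub hJ1m) h1)
  have hA2 := (adj_iff h v J2).mp (hs hv (hsub hJ2m) h2)
  constructor
  · have : J1.val.2 = (t:ℝ) := Jint_snd t
    rw [← this]; exact hA1.2.1
  · have : J2.val.1 = (t:ℝ) := by
      show (Jint (t+1)).1 = (t:ℝ)
      rw [Jint_fst, if_neg (by omega)]; push_cast; ring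
    rw [← this]; exact hA2.2.2

lemma maximal_eq_Mcl {k r : ℕ} {a : Fin r → ℕ} {b : Fin r → ℝ}
    (h : StronglyIntervalData k r a b) {s : Set (stronglyIntervalVerts k r a b)}
    (hs : Maximal (fun s => (intervalGraph (stronglyIntervalVerts k r a b)).IsClique s) s) :
    ∃ t : ℕ, t < k ∧ s = Mcl k r a b t := by
  have hfinV : Finite (stronglyIntervalVerts k r a b) := (verts_finite k r a b).to_subtype
  rcases Set.eq_empty_or_nonempty s with rfl | hne
  · exfalso
    set v0 : stronglyIntervalVerts k r a b := ⟨Jint 0, Jint_mem 0 (Nat.zero_le k)⟩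
    have hcl : (intervalGraph (stronglyIntervalVerts k r a b)).IsClique {v0} :=
      SimpleGraph.isClique_singleton v0
    exact Set.notMem_empty v0 (hs.2 hcl (Set.empty_subset _) rfl)
  obtain ⟨w, hw, hmax⟩ := Set.Finite.exists_maximalFor (leftNat h) s (Set.toFinite s) hne
  set t := leftNat h w with htdef
  have hmax' : ∀ v ∈ s, leftNat h v ≤ t := by
    intro v hv
    by_contra hlt
    push_neg at hlt
    have := hmax (j := v) hv (le_of_lt hlt)
    omega
  have htk : t < k := (leftNat_spec h w).2.1
  refine ⟨t, htk, ?_⟩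
  have hsub : s ⊆ Mcl k r a b t := by
    intro v hv
    obtain ⟨hv1, -, hv12, -⟩ := leftNat_spec h v
    constructor
    · rw [hv1]; exact_mod_cast hmax' v hv
    · by_cases hvw : v = w
      · rw [hvw] at hv1 ⊢
        calc (t:ℝ) = w.val.1 := ((leftNat_spec h w).1).symm
        _ ≤ w.val.2 := (leftNat_spec h w).2.2.1
      · have hA := (adj_iff h v w).mp (hs.1 hv hw hvw)
        calc (t:ℝ) = w.val.1 := ((leftNat_spec h w).1).symm
        _ ≤ v.val.2 := hA.2.2
  exact Set.Subset.antisymm hsub (hs.2 (Mcl_clique h t) hsub)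

lemma Mcl_ne {k r : ℕ} {a : Fin r → ℕ} {b : Fin r → ℝ} {t t' : ℕ}
    (htt : t < t') (ht' : t' < k) : Mcl k r a b t ≠ Mcl k r a b t' := by
  intro heq
  have hmem : (⟨Jint (t'+1), Jint_mem (t'+1) ht'⟩ : stronglyIntervalVerts k r a b)
      ∈ Mcl k r a b t' := Jt1_mem_Mcl ht'
  rw [← heq] at hmem
  have h1 := hmem.1
  rw [show ((⟨Jint (t'+1), Jint_mem (t'+1) ht'⟩ : stronglyIntervalVerts k r a b)).val.1
      = (Jint (t'+1)).1 from rfl, Jint_fst, if_neg (by omega)] at h1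
  push_cast at h1
  have : (t':ℝ) ≤ t := by linarith
  have : t' ≤ t := by exact_mod_cast this
  omega

lemma Jint_arith {i j : ℕ} :
    ((Jint i).1 ≤ (Jint j).2 ∧ (Jint j).1 ≤ (Jint i).2) ↔ (i ≤ j + 1 ∧ j ≤ i + 1) := by
  rw [Jint_fst, Jint_snd, Jint_fst, Jint_snd]
  have ci : ((i:ℝ) ≤ (j:ℝ) + 1) ↔ i ≤ j + 1 := by exact_mod_cast Nat.cast_le (α := ℝ)
  have cj : ((j:ℝ) ≤ (i:ℝ) + 1) ↔ j ≤ i + 1 := by exact_mod_cast Nat.cast_le (α := ℝ)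
  split_ifs with hi0 hj0 hj0
  · subst hi0; subst hj0; simp
  · subst hi0
    simp only [Nat.cast_zero] at ci cj ⊢
    have hj1 : (1:ℝ) ≤ (j:ℝ) := by exact_mod_cast Nat.one_le_iff_ne_zero.mpr hj0
    constructor
    · rintro ⟨-, h2⟩
      refine ⟨by omega, ?_⟩
      exact cj.mp (by linarith)
    · rintro ⟨-, h2⟩
      have := cj.mpr h2
      exact ⟨by positivity, by linarith⟩
  · subst hj0
    simp only [Nat.cast_zero] at ci cj ⊢
    have hi1 : (1:ℝ) ≤ (i:ℝ) := by exact_mod_cast Nat.one_le_iff_ne_zero.mpr hi0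
    constructor
    · rintro ⟨h1, -⟩
      exact ⟨ci.mp (by linarith), by omega⟩
    · rintro ⟨h1, -⟩
      have := ci.mpr h1
      exact ⟨by linarith, by positivity⟩
  · constructor
    · rintro ⟨h1, h2⟩
      exact ⟨ci.mp (by linarith), cj.mp (by linarith)⟩
    · rintro ⟨h1, h2⟩
      have h1' := ci.mpr h1
      have h2' := cj.mpr h2
      exact ⟨by linarith, by linarith⟩

lemma g_path {k r : ℕ} {a : Fin r → ℕ} {b : Fin r → ℝ} (h : StronglyIntervalData k r a b) :
    ∃ g : ℕ → (stronglyIntervalVerts k r a b),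
      (∀ i ≤ k, (g i).val = Jint i) ∧
      IsInducedPath (intervalGraph (stronglyIntervalVerts k r a b)) k g := by
  refine ⟨fun i => ⟨Jint (min i k), Jint_mem _ (min_le_right _ _)⟩, fun i hi => ?_, ?_, ?_⟩
  · show Jint (min i k) = Jint i
    rw [min_eq_left hi]
  · intro i hi j hj heq
    have h2 : Jint (min i k) = Jint (min j k) := congrArg Subtype.val heq
    have := Jint_inj h2
    rwa [min_eq_left hi, min_eq_left hj] at this
  · intro i hi j hj
    rw [adj_iff h]
    have e1 : ((⟨Jint (min i k), Jint_mem _ (min_le_right _ _)⟩ :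
        stronglyIntervalVerts k r a b)).val = Jint i := by
      show Jint (min i k) = Jint i; rw [min_eq_left hi]
    have e2 : ((⟨Jint (min j k), Jint_mem _ (min_le_right _ _)⟩ :
        stronglyIntervalVerts k r a b)).val = Jint j := by
      show Jint (min j k) = Jint j; rw [min_eq_left hj]
    rw [show (⟨Jint (min i k), Jint_mem _ (min_le_right _ _)⟩ :
        stronglyIntervalVerts k r a b) ≠ ⟨Jint (min j k), Jint_mem _ (min_le_right _ _)⟩
        ↔ Jint i ≠ Jint j from by rw [Ne, Subtype.mk_eq_mk, min_eq_left hi, min_eq_left hj],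
      e1, e2, Jint_arith]
    constructor
    · rintro ⟨hne, h1, h2⟩
      have : i ≠ j := fun hij => hne (by rw [hij])
      omega
    · rintro (rfl | rfl)
      · exact ⟨fun he => by omega ∘ Jint_inj <| he, by omega, by omega⟩
      · exact ⟨fun he => by omega ∘ Jint_inj <| he, by omega, by omega⟩

lemma path_le {k r : ℕ} {a : Fin r → ℕ} {b : Fin r → ℝ} (h : StronglyIntervalData k r a b)
    {m : ℕ} {f : ℕ → (stronglyIntervalVerts k r a b)}
    (hf : IsInducedPath (intervalGraph (stronglyIntervalVerts k r a b)) m f) : m ≤ k := by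
  obtain ⟨hinj, hadj⟩ := hf
  set e : ℕ → ℕ := fun i => max (leftNat h (f i)) (leftNat h (f (i+1))) with hedef
  have hpt : ∀ i < m, ((f i).val.1 ≤ (e i : ℝ) ∧ (e i : ℝ) ≤ (f i).val.2) ∧
      ((f (i+1)).val.1 ≤ (e i : ℝ) ∧ (e i : ℝ) ≤ (f (i+1)).val.2) := by
    intro i hi
    have hA := (adj_iff h (f i) (f (i+1))).mp
      ((hadj i (by omega) (i+1) (by omega)).mpr (Or.inl rfl))
    obtain ⟨s1, -, s112, -⟩ := leftNat_spec h (f i)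
    obtain ⟨s2, -, s212, -⟩ := leftNat_spec h (f (i+1))
    have hcast : ((e i : ℕ) : ℝ) = max (leftNat h (f i) : ℝ) (leftNat h (f (i+1)) : ℝ) := by
      rw [hedef]; push_cast; rfl
    refine ⟨⟨?_, ?_⟩, ?_, ?_⟩
    · rw [s1, hcast]; exact le_max_left _ _
    · rw [hcast]; exact max_le (s1 ▸ s112) (s2 ▸ hA.2.2)
    · rw [s2, hcast]; exact le_max_right _ _
    · rw [hcast]; exact max_le (s1 ▸ hA.2.1) (s2 ▸ s212)
  have hek : ∀ i < m, e i < k :=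
    fun i _ => max_lt (leftNat_spec h (f i)).2.1 (leftNat_spec h (f (i+1))).2.1
  have heinj : ∀ i < m, ∀ j < m, e i = e j → i = j := by
    have key : ∀ i < m, ∀ j < m, i < j → e i = e j → False := by
      intro i hi j hj hij heq
      have hne2 : f i ≠ f (j+1) := fun hfe => by
        have := hinj i (by omega) (j+1) (by omega) hfe; omega
      have hA : (intervalGraph (stronglyIntervalVerts k r a b)).Adj (f i) (f (j+1)) := by
        rw [adj_iff h]
        refine ⟨hne2, ?_, ?_⟩
        · calc (f i).val.1 ≤ (e i : ℝ) := (hpt i hi).1.1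
          _ = (e j : ℝ) := by rw [heq]
          _ ≤ (f (j+1)).val.2 := (hpt j hj).2.2
        · calc (f (j+1)).val.1 ≤ (e j : ℝ) := (hpt j hj).2.1
          _ = (e i : ℝ) := by rw [heq]
          _ ≤ (f i).val.2 := (hpt i hi).1.2
      have := (hadj i (by omega) (j+1) (by omega)).mp hA
      omega
    intro i hi j hj heq
    by_contra hne
    rcases Nat.lt_or_ge i j with hlt | hge
    · exact key i hi j hj hlt heq
    · exact key j hj i hi (by omega) heq.symm
  have hcard : (Finset.range m).card ≤ (Finset.range k).card := by
    apply Finset.card_le_card_of_injOn e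
    · intro i hi
      exact Finset.mem_range.mpr (hek i (Finset.mem_range.mp hi))
    · intro i hi j hj heq
      exact heinj i (Finset.mem_range.mp hi) j (Finset.mem_range.mp hj) heq
  simpa using hcard

lemma interval_connected {k r : ℕ} {a : Fin r → ℕ} {b : Fin r → ℝ}
    (h : StronglyIntervalData k r a b) :
    (intervalGraph (stronglyIntervalVerts k r a b)).Connected := by
  obtain ⟨g, hg, hginj, hgadj⟩ := g_path h
  have hchain : ∀ i ≤ k, (intervalGraph (stronglyIntervalVerts k r a b)).Reachable (g i) (g 0) := by
    intro i
    induction i with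
    | zero => exact fun _ => SimpleGraph.Reachable.refl _
    | succ n ih =>
      intro hn
      have hadj : (intervalGraph (stronglyIntervalVerts k r a b)).Adj (g (n+1)) (g n) :=
        (hgadj (n+1) hn n (by omega)).mpr (Or.inr rfl)
      exact hadj.reachable.trans (ih (by omega))
  have hall : ∀ v : (stronglyIntervalVerts k r a b),
      (intervalGraph (stronglyIntervalVerts k r a b)).Reachable v (g 0) := by
    intro v
    obtain ⟨t, hv1, htk, hv12, -⟩ := vert_struct h v
    have hgt1 : (g (t+1)).val = Jint (t+1) := hg (t+1) htk
    by_cases hv : v = g (t+1)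
    · rw [hv]; exact hchain (t+1) htk
    · have hA : (intervalGraph (stronglyIntervalVerts k r a b)).Adj v (g (t+1)) := by
        rw [adj_iff h]
        refine ⟨hv, ?_, ?_⟩
        · rw [hgt1, Jint_snd, hv1]; push_cast; linarith
        · rw [hgt1, Jint_fst, if_neg (by omega)]
          push_cast
          calc (t:ℝ) + 1 - 1 = (t:ℝ) := by ring
          _ = v.val.1 := hv1.symm
          _ ≤ v.val.2 := hv12
      exact hA.reachable.trans (hchain (t+1) htk)
  haveI : Nonempty (stronglyIntervalVerts k r a b) := ⟨g 0⟩
  exact SimpleGraph.Connected.mk fun u v => (hall u).trans (hall v).symm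

lemma isInducedPath_map {V W : Type*} {G : SimpleGraph V} {H : SimpleGraph W}
    (e : G ≃g H) {m : ℕ} {f : ℕ → V} (hf : IsInducedPath G m f) :
    IsInducedPath H m (fun i => e (f i)) := by
  obtain ⟨h1, h2⟩ := hf
  refine ⟨fun i hi j hj hij => h1 i hi j hj (e.toEquiv.injective hij), fun i hi j hj => ?_⟩
  rw [e.map_adj_iff]
  exact h2 i hi j hj

lemma longestInducedPath_iso {V W : Type*} {G : SimpleGraph V} {H : SimpleGraph W}
    (e : G ≃g H) : longestInducedPath G = longestInducedPath H := by
  unfold longestInducedPath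
  congr 1
  ext m
  exact ⟨fun ⟨f, hf⟩ => ⟨fun i => e (f i), isInducedPath_map e hf⟩,
    fun ⟨f, hf⟩ => ⟨fun i => e.symm (f i), isInducedPath_map e.symm hf⟩⟩

/-- Let `G` be the connected strongly interval graph on the vertex set
`{J_0,…,J_k} ∪ {I_1,…,I_r}`.  Then `J_0, J_1, …, J_k` is an induced path of length `k` in
`G`, the length of a longest induced path in `G` equals `k`, and `L(G) = k = c(G)`. -/
theorem inducedPath_of_stronglyInterval (k r : ℕ) (a : Fin r → ℕ) (b : Fin r → ℝ)
    (h : StronglyIntervalData k r a b) :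
    (∃ g : ℕ → (stronglyIntervalVerts k r a b),
      (∀ i ≤ k, (g i).val = Jint i) ∧
      IsInducedPath (intervalGraph (stronglyIntervalVerts k r a b)) k g) ∧
    longestInducedPath (intervalGraph (stronglyIntervalVerts k r a b)) = k ∧
    inducedPathSum (intervalGraph (stronglyIntervalVerts k r a b)) = k ∧
    numMaximalCliques (intervalGraph (stronglyIntervalVerts k r a b)) = k := by
  obtain ⟨g, hg, hgpath⟩ := g_path h
  have hlong : longestInducedPath (intervalGraph (stronglyIntervalVerts k r a b)) = k := by
    unfold longestInducedPath
    apply le_antisymm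
    · exact csSup_le ⟨k, g, hgpath⟩ (fun m ⟨f, hf⟩ => path_le h hf)
    · exact le_csSup ⟨k, fun m ⟨f, hf⟩ => path_le h hf⟩ ⟨g, hgpath⟩
  refine ⟨⟨g, hg, hgpath⟩, hlong, ?_, ?_⟩
  · -- inducedPathSum
    have hconn := interval_connected h
    haveI hsub := hconn.preconnected.subsingleton_connectedComponent
    haveI : Nonempty ((intervalGraph (stronglyIntervalVerts k r a b)).ConnectedComponent) :=
      ⟨(intervalGraph (stronglyIntervalVerts k r a b)).connectedComponentMk (g 0)⟩
    haveI : Unique ((intervalGraph (stronglyIntervalVerts k r a b)).ConnectedComponent) :=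
      ⟨⟨Classical.arbitrary _⟩, fun x => Subsingleton.elim _ _⟩
    unfold inducedPathSum
    rw [finsum_unique]
    set c := (default : (intervalGraph (stronglyIntervalVerts k r a b)).ConnectedComponent)
    have hsupp : c.supp = Set.univ := by
      apply Set.eq_univ_of_forall
      intro v
      exact Subsingleton.elim _ _
    rw [hsupp]
    rw [longestInducedPath_iso
      (SimpleGraph.induceUnivIso (intervalGraph (stronglyIntervalVerts k r a b)))]
    exact hlong
  · -- numMaximalCliques
    unfold numMaximalCliques
    have hset : {s : Set (stronglyIntervalVerts k r a b) |
        Maximal (fun t => (intervalGraph (stronglyIntervalVerts k r a b)).IsClique t) s}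
        = Mcl k r a b '' (Set.Iio k) := by
      ext s
      constructor
      · intro hs
        obtain ⟨t, htk, rfl⟩ := maximal_eq_Mcl h hs
        exact ⟨t, htk, rfl⟩
      · rintro ⟨t, htk, rfl⟩
        exact Mcl_maximal h htk
    rw [hset]
    rw [Set.ncard_image_of_injOn]
    · rw [show (Set.Iio k : Set ℕ) = ↑(Finset.range k) from by ext x; simp,
        Set.ncard_coe_finset, Finset.card_range]
    · intro t ht t' ht' heq
      by_contra hne
      rcases Nat.lt_or_ge t t' with hlt | hge
      · exact Mcl_ne hlt ht' heq
      · exact Mcl_ne (by omega) ht heq.symm
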